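/- ξ₉ = 9: for t ∈ [2/5, 3/5] the simplex S(t) ⊂ R⁹ with vertices (1,0,0,0,0,0,0,0,1), (1,1,0,1,t,1,1,0,0), (1,0,1,1,1−t,0,1,1,0), (0,1,1,1,t,0,0,1,1), (0,1,1,0,1−t,1,0,0,0), (0,0,0,1,t,0,1,1,0), (1,1,0,0,1−t,1,1,1,0), (0,1,1,0,t,1,1,0,1), (0,0,1,1,1−t,1,0,1,1), (1,0,0,0,1,0,0,0,1) is contained in Q₉ = [0,1]⁹ and satisfies ξ(S(t)) = 9, and every nondegenerate simplex T ⊆ Q₉ satisfies ξ(T) ≥ 9. -/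
import Mathlib


open Finset MeasureTheory

/-- The unit cube `[0,1]^n` in `ℝ^n`. -/
def unitCube (n : ℕ) : Set (Fin n → ℝ) := {x | ∀ i, 0 ≤ x i ∧ x i ≤ 1}

/-- The set of vertices of the unit cube, i.e. `{0,1}^n`. -/
def cubeVerts (n : ℕ) : Set (Fin n → ℝ) := {x | ∀ i, x i = 0 ∨ x i = 1}

/-- The (solid) simplex spanned by `n+1` points. -/
def simplexSet {n : ℕ} (v : Fin (n + 1) → (Fin n → ℝ)) : Set (Fin n → ℝ) :=
  convexHull ℝ (Set.range v)

/-- The centroid (center of gravity) of the simplex with vertices `v`. -/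
noncomputable def simplexCentroid {n : ℕ} (v : Fin (n + 1) → (Fin n → ℝ)) : Fin n → ℝ :=
  ((n : ℝ) + 1)⁻¹ • ∑ j, v j

/-- The homothety of the simplex with vertices `v`, with center the centroid and ratio `σ`. -/
noncomputable def homSimplex {n : ℕ} (v : Fin (n + 1) → (Fin n → ℝ)) (σ : ℝ) : Set (Fin n → ℝ) :=
  (fun x => simplexCentroid v + σ • (x - simplexCentroid v)) '' simplexSet v

/-- `ξ(S) = min {σ ≥ 1 : Q_n ⊆ σS}`. -/
noncomputable def xiVal {n : ℕ} (v : Fin (n + 1) → (Fin n → ℝ)) : ℝ :=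
  sInf {σ : ℝ | 1 ≤ σ ∧ unitCube n ⊆ homSimplex v σ}

/-- A function `ℝ^n → ℝ` is an affine polynomial of degree at most 1. -/
def IsAffinePoly {n : ℕ} (f : (Fin n → ℝ) → ℝ) : Prop :=
  ∃ a : Fin n → ℝ, ∃ b : ℝ, ∀ x, f x = ∑ i, a i * x i + b

/-- `lam` is the family of basic Lagrange polynomials of the simplex with vertices `v`. -/
def IsLagrangeBasis {n : ℕ} (v : Fin (n + 1) → (Fin n → ℝ))
    (lam : Fin (n + 1) → (Fin n → ℝ) → ℝ) : Prop :=
  (∀ j, IsAffinePoly (lam j)) ∧ ∀ j k, lam j (v k) = if j = k then 1 else 0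

/-- The `i`-th axial diameter of a set `S ⊆ ℝ^n`: the supremum of lengths of segments
in `S` parallel to the `i`-th coordinate axis. -/
noncomputable def axialDiam {n : ℕ} (S : Set (Fin n → ℝ)) (i : Fin n) : ℝ :=
  sSup {t : ℝ | ∃ x ∈ S, ∃ y ∈ S, (∀ k, k ≠ i → x k = y k) ∧ y i - x i = t}

/-- The family of simplices `S(t) ⊂ ℝ⁹`. -/
noncomputable def S9verts (t : ℝ) : Fin 10 → (Fin 9 → ℝ) :=
  ![![1, 0, 0, 0, 0, 0, 0, 0, 1], ![1, 1, 0, 1, t, 1, 1, 0, 0],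
    ![1, 0, 1, 1, 1 - t, 0, 1, 1, 0], ![0, 1, 1, 1, t, 0, 0, 1, 1],
    ![0, 1, 1, 0, 1 - t, 1, 0, 0, 0], ![0, 0, 0, 1, t, 0, 1, 1, 0],
    ![1, 1, 0, 0, 1 - t, 1, 1, 1, 0], ![0, 1, 1, 0, t, 1, 1, 0, 1],
    ![0, 0, 1, 1, 1 - t, 1, 0, 1, 1], ![1, 0, 0, 0, 1, 0, 0, 0, 1]]

namespace Xi9

/-- linear part -/
def linf (a : Fin 10 → Fin 9 → ℝ) (j : Fin 10) (x : Fin 9 → ℝ) : ℝ := ∑ i, a j i * x i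

/-- affine functional -/
def lamf (a : Fin 10 → Fin 9 → ℝ) (β : Fin 10 → ℝ) (j : Fin 10) (x : Fin 9 → ℝ) : ℝ :=
  linf a j x + β j

variable {a : Fin 10 → Fin 9 → ℝ} {β : Fin 10 → ℝ} {w : Fin 10 → Fin 9 → ℝ}

lemma linf_add (j : Fin 10) (u v : Fin 9 → ℝ) :
    linf a j (u + v) = linf a j u + linf a j v := by
  simp [linf, mul_add, Finset.sum_add_distrib]

lemma linf_smul (j : Fin 10) (σ : ℝ) (v : Fin 9 → ℝ) :
    linf a j (σ • v) = σ * linf a j v := by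
  simp only [linf, Finset.mul_sum, Pi.smul_apply, smul_eq_mul]
  exact Finset.sum_congr rfl fun i _ => by ring

lemma linf_sub (j : Fin 10) (u v : Fin 9 → ℝ) :
    linf a j (u - v) = linf a j u - linf a j v := by
  simp [linf, mul_sub, Finset.sum_sub_distrib]

lemma linf_finsum {ι : Type*} (j : Fin 10) (s : Finset ι) (f : ι → Fin 9 → ℝ) :
    linf a j (∑ k ∈ s, f k) = ∑ k ∈ s, linf a j (f k) := by
  simp only [linf, Finset.sum_apply, Finset.mul_sum]
  exact Finset.sum_comm

lemma lamf_combo (j : Fin 10) (p q : ℝ) (hpq : p + q = 1) (x y : Fin 9 → ℝ) :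
    lamf a β j (p • x + q • y) = p * lamf a β j x + q * lamf a β j y := by
  simp only [lamf, linf_add, linf_smul]
  linear_combination (-β j) * hpq

section main
variable (Hd : ∀ j k, lamf a β j (w k) = if j = k then 1 else 0)
  (Hs : ∀ x, ∑ j, lamf a β j x = 1)
  (Hr : ∀ x, ∑ j, lamf a β j x • w j = x)
  (Hw : ∀ k, w k ∈ unitCube 9)

include Hd in
lemma affineIndep : AffineIndependent ℝ w := by
  rw [affineIndependent_iff]
  intro s μ hsum hcomb k hk
  have key : ∑ e ∈ s, μ e * lamf a β k (w e) = μ k := by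
    rw [Finset.sum_congr rfl (fun e _ => by rw [Hd k e])]
    simp only [mul_ite, mul_one, mul_zero]
    simp [Finset.sum_ite_eq, hk]
  have expand : ∑ e ∈ s, μ e * lamf a β k (w e)
      = linf a k (∑ e ∈ s, μ e • w e) + (∑ e ∈ s, μ e) * β k := by
    rw [linf_finsum, Finset.sum_mul]
    rw [← Finset.sum_add_distrib]
    refine Finset.sum_congr rfl fun e _ => ?_
    rw [linf_smul]
    simp [lamf]; ring
  rw [expand, hcomb, hsum] at key
  simp [linf] at key
  exact key.symm

include Hd Hs Hr in
lemma simplex_eq : simplexSet w = {x | ∀ j, 0 ≤ lamf a β j x} := by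
  apply le_antisymm
  · apply convexHull_min
    · rintro x ⟨k, rfl⟩ j
      rw [Hd j k]
      split <;> norm_num
    · intro x hx y hy p q hp hq hpq j
      rw [lamf_combo j p q hpq x y]
      have := hx j; have := hy j
      positivity
  · intro x hx
    have h1 : ∑ j, lamf a β j x = 1 := Hs x
    have := Finset.centerMass_mem_convexHull (t := Finset.univ)
      (w := fun j => lamf a β j x) (z := w)
      (fun i _ => hx i) (by rw [h1]; norm_num) (fun i _ => Set.mem_range_self i)
    rwa [Finset.centerMass_eq_of_sum_1 _ _ h1, Hr x] at this

include Hd in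
lemma lamf_centroid (j : Fin 10) : lamf a β j (simplexCentroid w) = 1 / 10 := by
  have h10 : ((9 : ℕ) : ℝ) + 1 = 10 := by norm_num
  have : lamf a β j (simplexCentroid w)
      = (10 : ℝ)⁻¹ * (∑ k, linf a j (w k)) + β j := by
    simp only [lamf, simplexCentroid, h10, linf_smul, linf_finsum]
  rw [this]
  have : ∑ k, linf a j (w k) = ∑ k, (lamf a β j (w k) - β j) := by
    refine Finset.sum_congr rfl fun k _ => by simp [lamf]
  rw [this]
  have : ∑ k, (lamf a β j (w k) - β j) = (∑ k, lamf a β j (w k)) - 10 * β j := by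
    rw [Finset.sum_sub_distrib]
    norm_num
  rw [this]
  have : ∑ k, lamf a β j (w k) = 1 := by
    rw [Finset.sum_congr rfl (fun k _ => Hd j k)]
    simp
  rw [this]; ring

include Hd Hs Hr in
lemma mem_hom_iff {σ : ℝ} (hσ : 0 < σ) (y : Fin 9 → ℝ) :
    y ∈ homSimplex w σ ↔ ∀ j, (1 - σ) / 10 ≤ lamf a β j y := by
  have hc := fun j => lamf_centroid (a := a) (β := β) (w := w) Hd j
  have key : ∀ x j, lamf a β j (simplexCentroid w + σ • (x - simplexCentroid w))
      = 1 / 10 + σ * (lamf a β j x - 1 / 10) := by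
    intro x j
    simp only [lamf, linf_add, linf_smul, linf_sub] at *
    have := hc j
    nlinarith [hc j]
  constructor
  · rintro ⟨x, hx, rfl⟩ j
    rw [key x j]
    rw [simplex_eq Hd Hs Hr] at hx
    have := hx j
    nlinarith
  · intro h
    refine ⟨simplexCentroid w + σ⁻¹ • (y - simplexCentroid w), ?_, ?_⟩
    · rw [simplex_eq Hd Hs Hr]
      intro j
      have hj := h j
      have : σ * σ⁻¹ = 1 := mul_inv_cancel₀ (ne_of_gt hσ)
      have h2 : lamf a β j (simplexCentroid w + σ⁻¹ • (y - simplexCentroid w))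
          = 1 / 10 + σ⁻¹ * (lamf a β j y - 1 / 10) := by
        have := hc j
        simp only [lamf, linf_add, linf_smul, linf_sub] at this ⊢
        nlinarith [this]
      rw [h2]
      have hinv : 0 ≤ σ⁻¹ := le_of_lt (inv_pos.mpr hσ)
      have h4 : σ⁻¹ * σ = 1 := inv_mul_cancel₀ (ne_of_gt hσ)
      nlinarith [mul_le_mul_of_nonneg_left
        (show (1 - σ) / 10 - 1 / 10 ≤ lamf a β j y - 1 / 10 by linarith) hinv]
    · show simplexCentroid w + σ • (simplexCentroid w + σ⁻¹ • (y - simplexCentroid w) - simplexCentroid w) = y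
      have h5 : simplexCentroid w + σ⁻¹ • (y - simplexCentroid w) - simplexCentroid w
          = σ⁻¹ • (y - simplexCentroid w) := by abel
      rw [h5, smul_inv_smul₀ (ne_of_gt hσ)]
      abel

lemma linf_zero (j : Fin 10) : linf a j 0 = 0 := by simp [linf]

lemma linf_single (j : Fin 10) (i : Fin 9) : linf a j (Pi.single i (1 : ℝ)) = a j i := by
  simp [linf, Pi.single_apply, mul_ite, Finset.sum_ite_eq']

include Hs in
lemma beta_sum : ∑ j, β j = 1 := by
  have := Hs 0
  simpa [lamf, linf_zero] using this

include Hs in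
lemma col_sum (i : Fin 9) : ∑ j, a j i = 0 := by
  have h1 := Hs (Pi.single i (1 : ℝ))
  have h2 := beta_sum (a := a) (β := β) Hs
  simp only [lamf, linf_single] at h1
  rw [Finset.sum_add_distrib, h2] at h1
  linarith

include Hr in
lemma ei_coord (i : Fin 9) : ∑ j, a j i * w j i = 1 := by
  have h1 := congrFun (Hr (Pi.single i (1 : ℝ))) i
  have h2 := congrFun (Hr 0) i
  simp only [Finset.sum_apply, Pi.smul_apply, smul_eq_mul, lamf, linf_single, linf_zero,
    Pi.single_apply, Pi.zero_apply, zero_add, if_pos rfl] at h1 h2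
  rw [show (∑ j, (a j i + β j) * w j i) = (∑ j, a j i * w j i) + ∑ j, β j * w j i by
    rw [← Finset.sum_add_distrib]; exact Finset.sum_congr rfl fun j _ => by ring] at h1
  rw [h2] at h1
  simpa using h1

include Hd Hs Hr Hw in
lemma sigma_lower {σ : ℝ} (hσ1 : 1 ≤ σ) (hsub : unitCube 9 ⊆ homSimplex w σ) : 9 ≤ σ := by
  have hσ0 : (0 : ℝ) < σ := lt_of_lt_of_le one_pos hσ1
  -- each column's negative-part sum is at least 1
  have hNi : ∀ i : Fin 9, 1 ≤ ∑ j, max (-(a j i)) 0 := by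
    intro i
    have hPN : (∑ j, max (a j i) 0) - (∑ j, max (-(a j i)) 0) = 0 := by
      rw [← Finset.sum_sub_distrib]
      rw [Finset.sum_congr rfl fun j _ => (max_zero_sub_max_neg_zero_eq_self (a j i))]
      exact col_sum Hs i
    have hX : ∑ j, max (a j i) 0 * w j i ≤ ∑ j, max (a j i) 0 := by
      refine Finset.sum_le_sum fun j _ => ?_
      have := (Hw j) i
      nlinarith [le_max_right (a j i) 0]
    have hY : 0 ≤ ∑ j, max (-(a j i)) 0 * w j i :=
      Finset.sum_nonneg fun j _ => mul_nonneg (le_max_right _ _) ((Hw j) i).1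
    have hXY : (∑ j, max (a j i) 0 * w j i) - (∑ j, max (-(a j i)) 0 * w j i) = 1 := by
      rw [← Finset.sum_sub_distrib]
      rw [Finset.sum_congr rfl fun j _ => by
        rw [← sub_mul, max_zero_sub_max_neg_zero_eq_self (a j i)]]
      exact ei_coord Hr i
    linarith
  -- worst cube vertex for each j
  set e : Fin 10 → Fin 9 → ℝ := fun j i => if a j i < 0 then 1 else 0 with he
  have hecube : ∀ j, e j ∈ unitCube 9 := by
    intro j i
    simp only [he]
    split <;> norm_num
  have heval : ∀ j, lamf a β j (e j) = (∑ i, -(max (-(a j i)) 0)) + β j := by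
    intro j
    simp only [lamf, linf, he]
    congr 1
    refine Finset.sum_congr rfl fun i _ => ?_
    rcases lt_or_ge (a j i) 0 with h | h
    · rw [if_pos h, max_eq_left (by linarith)]; ring
    · rw [if_neg (not_lt.mpr h), max_eq_right (by linarith)]; ring
  have hbound : ∀ j, (1 - σ) / 10 ≤ lamf a β j (e j) := fun j =>
    ((mem_hom_iff Hd Hs Hr hσ0 (e j)).mp (hsub (hecube j))) j
  have hsum2 : (1 - σ) ≤ ∑ j, lamf a β j (e j) := by
    have h := Finset.sum_le_sum fun j (_ : j ∈ (Finset.univ : Finset (Fin 10))) => hbound j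
    rw [Finset.sum_const, Finset.card_univ] at h
    simp only [Fintype.card_fin, nsmul_eq_mul, Nat.cast_ofNat] at h
    linarith
  have hsum3 : ∑ j, lamf a β j (e j) = 1 - ∑ i, ∑ j, max (-(a j i)) 0 := by
    rw [Finset.sum_congr rfl fun j _ => heval j, Finset.sum_add_distrib,
      beta_sum (a := a) (β := β) Hs, Finset.sum_comm]
    simp [Finset.sum_neg_distrib]
    ring
  have h9 : (9 : ℝ) ≤ ∑ i, ∑ j, max (-(a j i)) 0 := by
    have := Finset.sum_le_sum fun i (_ : i ∈ (Finset.univ : Finset (Fin 9))) => hNi i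
    simpa using this
  rw [hsum3] at hsum2
  linarith

include Hd Hs Hr in
lemma exists_sigma : ∃ σ : ℝ, 1 ≤ σ ∧ unitCube 9 ⊆ homSimplex w σ := by
  set B : ℝ := ∑ j, ((∑ i, |a j i|) + |β j|) with hB
  have hBj : ∀ j : Fin 10, (∑ i, |a j i|) + |β j| ≤ B :=
    fun j => Finset.single_le_sum (f := fun k => (∑ i, |a k i|) + |β k|)
      (fun k _ => add_nonneg (Finset.sum_nonneg fun i _ => abs_nonneg _) (abs_nonneg _))
      (Finset.mem_univ j)
  have hB0 : 0 ≤ B :=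
    Finset.sum_nonneg fun j _ =>
      add_nonneg (Finset.sum_nonneg fun i _ => abs_nonneg _) (abs_nonneg _)
  refine ⟨1 + 10 * B, by linarith, ?_⟩
  intro x hx
  rw [mem_hom_iff Hd Hs Hr (by linarith : (0:ℝ) < 1 + 10 * B) x]
  intro j
  have hterm : ∀ i : Fin 9, -|a j i| ≤ a j i * x i := by
    intro i
    rcases le_or_gt 0 (a j i) with h | h
    · have := mul_nonneg h (hx i).1
      have := abs_nonneg (a j i)
      linarith
    · have h1 : a j i * 1 ≤ a j i * x i :=
        mul_le_mul_of_nonpos_left (hx i).2 (le_of_lt h)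
      rw [abs_of_neg h]
      linarith
  have hlin : -(∑ i, |a j i|) ≤ linf a j x := by
    rw [← Finset.sum_neg_distrib]
    exact Finset.sum_le_sum fun i _ => hterm i
  have hβ : -|β j| ≤ β j := neg_abs_le _
  have : -B ≤ lamf a β j x := by
    have := hBj j
    simp only [lamf]
    linarith
  linarith

include Hd Hs Hr Hw in
lemma xi_ge_9 : (9 : ℝ) ≤ xiVal w := by
  obtain ⟨σ₀, h1, h2⟩ := exists_sigma (a := a) (β := β) Hd Hs Hr
  exact le_csInf ⟨σ₀, h1, h2⟩ fun σ hσ => sigma_lower Hd Hs Hr Hw hσ.1 hσ.2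

include Hd Hs Hr Hw in
lemma xi_eq_9 (Hlb : ∀ x ∈ unitCube 9, ∀ j, -(4/5 : ℝ) ≤ lamf a β j x) : xiVal w = 9 := by
  refine le_antisymm ?_ (xi_ge_9 Hd Hs Hr Hw)
  refine csInf_le ⟨1, fun σ hσ => hσ.1⟩ ⟨by norm_num, ?_⟩
  intro x hx
  rw [mem_hom_iff Hd Hs Hr (by norm_num : (0:ℝ) < 9) x]
  intro j
  have := Hlb x hx j
  linarith

end main

lemma partB (w : Fin 10 → Fin 9 → ℝ) (hw : AffineIndependent ℝ w)
    (hsub : simplexSet w ⊆ unitCube 9) : (9 : ℝ) ≤ xiVal w := by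
  have hcard : Fintype.card (Fin 10) = Module.finrank ℝ (Fin 9 → ℝ) + 1 := by
    simp [Module.finrank_fintype_fun_eq_card]
  have htop : affineSpan ℝ (Set.range w) = ⊤ :=
    hw.affineSpan_eq_top_iff_card_eq_finrank_add_one.mpr hcard
  let b : AffineBasis (Fin 10) ℝ (Fin 9 → ℝ) := ⟨w, hw, htop⟩
  have hbw : ∀ k, b k = w k := fun k => rfl
  set a : Fin 10 → Fin 9 → ℝ := fun j i => b.coord j (Pi.single i 1) - b.coord j 0 with ha
  set β : Fin 10 → ℝ := fun j => b.coord j 0 with hβ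
  have hdec : ∀ (j : Fin 10) (y : Fin 9 → ℝ),
      b.coord j y = (b.coord j).linear y + b.coord j 0 := by
    intro j y
    conv_lhs => rw [AffineMap.decomp (b.coord j)]
    simp
  have hlam : ∀ j x, lamf a β j x = b.coord j x := by
    intro j x
    have hlin := LinearMap.pi_apply_eq_sum_univ (b.coord j).linear x
    have hone : ∀ i : Fin 9, (fun k => if i = k then (1:ℝ) else 0) = Pi.single i 1 := by
      intro i; funext k; simp [Pi.single_apply, eq_comm]
    rw [hdec j x, hlin]
    simp only [lamf, linf, ha, smul_eq_mul]
    congr 1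
    refine Finset.sum_congr rfl fun i _ => ?_
    rw [hone i, hdec j (Pi.single i 1)]
    ring
  have Hd : ∀ j k, lamf a β j (w k) = if j = k then 1 else 0 := by
    intro j k
    rw [hlam, ← hbw k, AffineBasis.coord_apply]
  have Hs : ∀ x, ∑ j, lamf a β j x = 1 := by
    intro x
    rw [Finset.sum_congr rfl fun j _ => hlam j x]
    exact b.sum_coord_apply_eq_one x
  have Hr : ∀ x, ∑ j, lamf a β j x • w j = x := by
    intro x
    rw [Finset.sum_congr rfl fun j _ => by rw [hlam j x]]
    exact b.linear_combination_coord_eq_self x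
  have Hw : ∀ k, w k ∈ unitCube 9 := fun k =>
    hsub (subset_convexHull ℝ _ (Set.mem_range_self k))
  exact xi_ge_9 Hd Hs Hr Hw

noncomputable def a9 (t : ℝ) : Fin 10 → Fin 9 → ℝ :=
  ![![(3/5 - t), (t - 3/5), (2/5 - t), (t - 3/5), (-1), (2/5 - t), (t - 3/5), (2/5 - t), (t - 2/5)],
    ![1/5, 1/5, (-1/5), 3/5, 0, 1/5, 0, (-2/5), 0],
    ![2/5, (-1/5), 3/5, 0, 0, (-1/5), 1/5, 0, (-1/5)],
    ![0, 3/5, 0, 1/5, 0, (-2/5), (-1/5), 1/5, 1/5],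
    ![(-1/5), 0, 1/5, (-1/5), 0, 0, (-2/5), (-1/5), (-3/5)],
    ![(-3/5), (-1/5), (-2/5), 0, 0, (-1/5), 1/5, 0, (-1/5)],
    ![1/5, 1/5, (-1/5), (-2/5), 0, 1/5, 0, 3/5, 0],
    ![(-1/5), 0, 1/5, (-1/5), 0, 0, 3/5, (-1/5), 2/5],
    ![0, (-2/5), 0, 1/5, 0, 3/5, (-1/5), 1/5, 1/5],
    ![(t - 2/5), (2/5 - t), (t - 3/5), (2/5 - t), 1, (t - 3/5), (2/5 - t), (t - 3/5), (3/5 - t)]]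

noncomputable def c9 : Fin 10 → ℝ :=
  ![4/5, (-1/5), (-1/5), (-1/5), 4/5, 4/5, (-1/5), (-1/5), (-1/5), (-1/5)]

set_option maxHeartbeats 2000000 in
lemma A_Hd (t : ℝ) : ∀ j k, lamf (a9 t) c9 j (S9verts t k) = if j = k then 1 else 0 := by
  intro j k
  fin_cases j <;> fin_cases k <;>
    · simp only [lamf, linf, a9, c9, S9verts, Fin.sum_univ_succ, Fin.sum_univ_zero,
        Matrix.cons_val_succ', Matrix.cons_val_zero', Matrix.cons_val_succ, Matrix.cons_val_zero,
        Matrix.cons_val_one, Matrix.head_cons, Fin.mk_one, add_zero]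
      norm_num [Fin.ext_iff]
      try ring

set_option maxHeartbeats 1000000 in
lemma A_Hs (t : ℝ) : ∀ x, ∑ j, lamf (a9 t) c9 j x = 1 := by
  intro x
  simp only [lamf, linf, a9, c9, Fin.sum_univ_succ, Fin.sum_univ_zero,
    Matrix.cons_val_succ', Matrix.cons_val_zero', Matrix.cons_val_succ, Matrix.cons_val_zero,
    Matrix.cons_val_one, Matrix.head_cons, Fin.mk_one, add_zero]
  ring

set_option maxHeartbeats 2000000 in
lemma A_Hr (t : ℝ) : ∀ x, ∑ j, lamf (a9 t) c9 j x • S9verts t j = x := by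
  intro x
  funext i
  rw [show (∑ j, lamf (a9 t) c9 j x • S9verts t j) i
      = ∑ j, lamf (a9 t) c9 j x * S9verts t j i by simp [Finset.sum_apply]]
  fin_cases i <;>
    · simp only [lamf, linf, a9, c9, S9verts, Fin.sum_univ_succ, Fin.sum_univ_zero,
        Matrix.cons_val_succ', Matrix.cons_val_zero', Matrix.cons_val_succ, Matrix.cons_val_zero,
        Matrix.cons_val_one, Matrix.head_cons, Fin.mk_one, add_zero]
      ring_nf
      try rfl

set_option maxHeartbeats 1000000 in
lemma A_Hw {t : ℝ} (ht : t ∈ Set.Icc (2/5 : ℝ) (3/5)) : ∀ k, S9verts t k ∈ unitCube 9 := by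
  have h1 := ht.1; have h2 := ht.2
  intro k i
  fin_cases k <;> fin_cases i <;>
    · simp only [S9verts, Matrix.cons_val_succ', Matrix.cons_val_zero', Matrix.cons_val_succ,
        Matrix.cons_val_zero, Matrix.cons_val_one, Matrix.head_cons]
      constructor <;> linarith

lemma lamf_lower (a : Fin 10 → Fin 9 → ℝ) (β : Fin 10 → ℝ) (x : Fin 9 → ℝ)
    (hx : x ∈ unitCube 9) (j : Fin 10) :
    (∑ i, min (a j i) 0) + β j ≤ lamf a β j x := by
  unfold lamf linf
  have h : ∀ i : Fin 9, min (a j i) 0 ≤ a j i * x i := by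
    intro i
    rcases le_or_gt 0 (a j i) with h | h
    · exact le_trans (min_le_right _ _) (mul_nonneg h (hx i).1)
    · refine le_trans (min_le_left _ _) ?_
      have := mul_le_mul_of_nonpos_left (hx i).2 (le_of_lt h)
      linarith
  have := Finset.sum_le_sum fun i (_ : i ∈ Finset.univ) => h i
  linarith

set_option maxHeartbeats 1000000 in
lemma A_Hlb {t : ℝ} (ht : t ∈ Set.Icc (2/5 : ℝ) (3/5)) :
    ∀ x ∈ unitCube 9, ∀ j, -(4/5 : ℝ) ≤ lamf (a9 t) c9 j x := by
  have h1 := ht.1; have h2 := ht.2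
  intro x hx j
  refine le_trans ?_ (lamf_lower (a9 t) c9 x hx j)
  fin_cases j <;>
    simp only [a9, c9, Fin.sum_univ_succ, Fin.sum_univ_zero,
      Matrix.cons_val_succ', Matrix.cons_val_zero', Matrix.cons_val_succ, Matrix.cons_val_zero,
      Matrix.cons_val_one, Matrix.head_cons, Fin.mk_one, add_zero]
  · rw [min_eq_right (show (0:ℝ) ≤ 3/5 - t by linarith),
      min_eq_left (show t - 3/5 ≤ (0:ℝ) by linarith),
      min_eq_left (show 2/5 - t ≤ (0:ℝ) by linarith),
      min_eq_left (show (-1:ℝ) ≤ 0 by norm_num),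
      min_eq_right (show (0:ℝ) ≤ t - 2/5 by linarith)]
    linarith
  · norm_num
  · norm_num
  · norm_num
  · norm_num
  · norm_num
  · norm_num
  · norm_num
  · norm_num
  · rw [min_eq_right (show (0:ℝ) ≤ t - 2/5 by linarith),
      min_eq_left (show 2/5 - t ≤ (0:ℝ) by linarith),
      min_eq_left (show t - 3/5 ≤ (0:ℝ) by linarith),
      min_eq_right (show (0:ℝ) ≤ (1:ℝ) by norm_num),
      min_eq_right (show (0:ℝ) ≤ 3/5 - t by linarith)]
    linarith

lemma cube_convex : Convex ℝ (unitCube 9) := by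
  intro x hx y hy p q hp hq hpq i
  have h1 := (hx i).1; have h2 := (hx i).2
  have h3 := (hy i).1; have h4 := (hy i).2
  constructor
  · have := add_nonneg (mul_nonneg hp h1) (mul_nonneg hq h3)
    simpa using this
  · have hp1 : p * x i ≤ p := by nlinarith
    have hq1 : q * y i ≤ q := by nlinarith
    have : p * x i + q * y i ≤ 1 := by linarith
    simpa using this

end Xi9


/-- `ξ₉ = 9`: for `t ∈ [2/5, 3/5]` the simplex `S(t)` is contained in `Q₉` with
`ξ(S(t)) = 9`, and every nondegenerate simplex `T ⊆ Q₉` satisfies `ξ(T) ≥ 9`. -/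
theorem xi_9_eq_9 :
    (∀ t ∈ Set.Icc (2/5 : ℝ) (3/5),
      simplexSet (S9verts t) ⊆ unitCube 9 ∧ xiVal (S9verts t) = 9) ∧
    (∀ w : Fin 10 → (Fin 9 → ℝ), AffineIndependent ℝ w →
      simplexSet w ⊆ unitCube 9 → (9 : ℝ) ≤ xiVal w) := by
  constructor
  · intro t ht
    have Hd := Xi9.A_Hd t
    have Hs := Xi9.A_Hs t
    have Hr := Xi9.A_Hr t
    have Hw := Xi9.A_Hw ht
    have Hlb := Xi9.A_Hlb ht
    refine ⟨?_, Xi9.xi_eq_9 Hd Hs Hr Hw Hlb⟩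
    exact convexHull_min (by rintro y ⟨k, rfl⟩; exact Hw k) Xi9.cube_convex
  · intro w hw hsub
    exact Xi9.partB w hw hsub
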